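/- Let T ≥ 1 and K ≥ 2, let r_{t,a} ∈ [−1, 1] be arbitrary rewards for t ∈ {1,…,T} and a ∈ {1,…,K}, and suppose there is an expert a* with r_{t,a*} = 0 for all t. Let learning rates satisfy 1/4 ≥ η_1 ≥ η_2 ≥ ⋯ ≥ η_T > 0, and define for each t the multiplicative-weights distribution p_{t,a} = exp(η_t · Σ_{s<t} r_{s,a}) / Σ_{a'=1}^K exp(η_t · Σ_{s<t} r_{s,a'}). Set X̄_t := Σ_{a=1}^K p_{t,a} r_{t,a}, r_t* := max_{a∈[K]} r_{t,a}, and V_T := (log K)/η_T + Σ_{t=1}^T η_t r_t*. Then max_{a∈[K]} Σ_{t=1}^T r_{t,a} − Σ_{t=1}^T X̄_t ≤ 2·V_T. -/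

import Mathlib

open Finset

lemma exp_neg_quad {x : ℝ} (h0 : 0 ≤ x) (h1 : x ≤ 1/2) :
    Real.exp (-x) ≤ 1 - x + (5/8) * x^2 := by
  have hb := Real.exp_bound (x := -x) (by rw [abs_neg, abs_of_nonneg h0]; linarith)
    (n := 3) (by norm_num)
  have hsum : ∑ m ∈ Finset.range 3, (-x)^m / m.factorial = 1 - x + x^2/2 := by
    simp [Finset.sum_range_succ, Nat.factorial]
    ring
  rw [hsum, abs_neg, abs_of_nonneg h0] at hb
  have h2 := (abs_sub_le_iff.1 hb).1
  have hx3 : x^3 ≤ (1/2) * x^2 := by nlinarith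
  norm_num [Nat.factorial] at h2
  nlinarith [sq_nonneg x]

lemma lse_mono {K : ℕ} (hK : 0 < K) (f : Fin K → ℝ) {b a : ℝ} (hb : 0 < b) (hba : b ≤ a) :
    (Real.log (∑ i, Real.exp (b * f i)) - Real.log K) / b ≤
    (Real.log (∑ i, Real.exp (a * f i)) - Real.log K) / a := by
  have ha : 0 < a := lt_of_lt_of_le hb hba
  have hKR : (0:ℝ) < K := by exact_mod_cast hK
  have hSb : 0 < ∑ i, Real.exp (b * f i) := by
    apply Finset.sum_pos (fun i _ => Real.exp_pos _)
    exact univ_nonempty_iff.mpr ⟨⟨0, hK⟩⟩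
  have hSa : 0 < ∑ i, Real.exp (a * f i) := by
    apply Finset.sum_pos (fun i _ => Real.exp_pos _)
    exact univ_nonempty_iff.mpr ⟨⟨0, hK⟩⟩
  have hp : 1 ≤ a / b := (one_le_div hb).mpr hba
  have key := Real.arith_mean_le_rpow_mean Finset.univ (fun _ : Fin K => (K:ℝ)⁻¹)
    (fun i => Real.exp (b * f i)) (fun i _ => by positivity)
    (by simp [Finset.card_univ]; field_simp) (fun i _ => (Real.exp_pos _).le) hp
  have hzp : ∀ i : Fin K, Real.exp (b * f i) ^ (a/b) = Real.exp (a * f i) := by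
    intro i
    rw [← Real.exp_mul]
    congr 1
    field_simp
  simp only [hzp] at key
  have e1 : ∑ i : Fin K, (K:ℝ)⁻¹ * Real.exp (b * f i) = (K:ℝ)⁻¹ * ∑ i, Real.exp (b * f i) := by
    rw [Finset.mul_sum]
  have e2 : ∑ i : Fin K, (K:ℝ)⁻¹ * Real.exp (a * f i) = (K:ℝ)⁻¹ * ∑ i, Real.exp (a * f i) := by
    rw [Finset.mul_sum]
  rw [e1, e2] at key
  have hmulpos : 0 < (K:ℝ)⁻¹ * ∑ i, Real.exp (a * f i) := by positivity
  have hlog := Real.log_le_log (by positivity) key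
  rw [Real.log_rpow hmulpos, Real.log_mul (by positivity) hSb.ne',
    Real.log_mul (by positivity) hSa.ne', Real.log_inv] at hlog
  have h1b : 1/(a/b) = b/a := by field_simp
  rw [h1b] at hlog
  rw [div_le_div_iff₀ hb ha]
  have := mul_le_mul_of_nonneg_right hlog ha.le
  calc (Real.log (∑ i, Real.exp (b * f i)) - Real.log K) * a
      = (-Real.log K + Real.log (∑ i, Real.exp (b * f i))) * a := by ring
    _ ≤ (b/a * (-Real.log K + Real.log (∑ i, Real.exp (a * f i)))) * a := this
    _ = (Real.log (∑ i, Real.exp (a * f i)) - Real.log K) * b := by field_simp; ring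


set_option maxHeartbeats 1000000 in
noncomputable def mwS {K : ℕ} (r : ℕ → Fin K → ℝ) (t : ℕ) (a : Fin K) : ℝ :=
  ∑ s ∈ Finset.range t, r s a

noncomputable def mwW {K : ℕ} (r : ℕ → Fin K → ℝ) (η : ℕ → ℝ) (t : ℕ) : ℝ :=
  ∑ a, Real.exp (η t * mwS r t a)

noncomputable def mwXb {K : ℕ} (r : ℕ → Fin K → ℝ) (η : ℕ → ℝ) (t : ℕ) : ℝ :=
  ∑ a, Real.exp (η t * mwS r t a) / mwW r η t * r t a

set_option maxHeartbeats 2000000 in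
theorem mw_master {K : ℕ} (hK : 2 ≤ K)
    (r : ℕ → Fin K → ℝ) (η : ℕ → ℝ) (rs : ℕ → ℝ) (astar : Fin K)
    (hr1 : ∀ t a, -1 ≤ r t a) (hr2 : ∀ t a, r t a ≤ rs t)
    (hrs1 : ∀ t, rs t ≤ 1) (hstar : ∀ t, r t astar = 0)
    (hη_pos : ∀ t, 0 < η t) (hη_le : ∀ t, η t ≤ 1/4)
    (hη_mono : ∀ s t : ℕ, s ≤ t → η t ≤ η s)
    (T : ℕ) (a : Fin K) :
    mwS r T a - ∑ t ∈ range T, mwXb r η t ≤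
      2 * (Real.log K / η T + ∑ t ∈ range T, η t * rs t) := by
  have hKpos : 0 < K := by omega
  have hKR : (1:ℝ) ≤ K := by exact_mod_cast Nat.one_le_iff_ne_zero.mpr (by omega)
  have hlogK : 0 ≤ Real.log K := Real.log_nonneg hKR
  have hne : (Finset.univ : Finset (Fin K)).Nonempty := univ_nonempty_iff.mpr ⟨astar⟩
  have hrs0 : ∀ t, 0 ≤ rs t := fun t => (hstar t) ▸ hr2 t astar
  have hW_pos : ∀ t, 0 < mwW r η t := fun t =>
    Finset.sum_pos (fun i _ => Real.exp_pos _) hne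
  -- p facts
  have hp_pos : ∀ t a, 0 < Real.exp (η t * mwS r t a) / mwW r η t := fun t a =>
    div_pos (Real.exp_pos _) (hW_pos t)
  have hp_sum : ∀ t, ∑ a, Real.exp (η t * mwS r t a) / mwW r η t = 1 := by
    intro t
    rw [← Finset.sum_div, show (∑ a : Fin K, Real.exp (η t * mwS r t a)) = mwW r η t from rfl,
      div_self (hW_pos t).ne']
  -- Xbar bounds
  have hXb_le : ∀ t, mwXb r η t ≤ rs t := by
    intro t
    calc mwXb r η t ≤ ∑ a, Real.exp (η t * mwS r t a) / mwW r η t * rs t :=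
          Finset.sum_le_sum (fun a _ =>
            mul_le_mul_of_nonneg_left (hr2 t a) (hp_pos t a).le)
      _ = rs t := by rw [← Finset.sum_mul, hp_sum, one_mul]
  have hXb_ge : ∀ t, -1 ≤ mwXb r η t := by
    intro t
    have : ∑ a, Real.exp (η t * mwS r t a) / mwW r η t * (-1:ℝ) ≤ mwXb r η t :=
      Finset.sum_le_sum (fun a _ =>
        mul_le_mul_of_nonneg_left (hr1 t a) (hp_pos t a).le)
    rwa [← Finset.sum_mul, hp_sum, one_mul] at this
  -- Φ
  set Φ : ℕ → ℝ := fun t => (Real.log (mwW r η t) - Real.log K) / η t with hΦdef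
  have hΦ0 : Φ 0 = 0 := by
    have : mwW r η 0 = K := by
      simp [mwW, mwS]
    simp [hΦdef, this]
  -- step
  have step : ∀ t, Φ (t+1) ≤ Φ t + mwXb r η t + (5/4) * η t * (rs t - mwXb r η t) := by
    intro t
    have hηt := hη_pos t
    have hηt1 := hη_pos (t+1)
    have hL0 : 0 ≤ rs t - mwXb r η t := by linarith [hXb_le t]
    have hL2 : rs t - mwXb r η t ≤ 2 := by linarith [hXb_ge t, hrs1 t]
    -- (i) monotone switch
    have h1 : Φ (t+1) ≤
        (Real.log (∑ i, Real.exp (η t * mwS r (t+1) i)) - Real.log K) / η t := by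
      have := lse_mono hKpos (mwS r (t+1)) hηt1 (hη_mono t (t+1) (Nat.le_succ t))
      simpa [hΦdef, mwW] using this
    -- (ii) increment bound
    set Q : ℝ := ∑ i, Real.exp (η t * mwS r t i) / mwW r η t * Real.exp (η t * r t i)
      with hQdef
    have hQpos : 0 < Q :=
      Finset.sum_pos (fun i _ => mul_pos (hp_pos t i) (Real.exp_pos _)) hne
    have hfact : ∑ i, Real.exp (η t * mwS r (t+1) i) = mwW r η t * Q := by
      rw [hQdef, Finset.mul_sum]
      refine Finset.sum_congr rfl (fun i _ => ?_)
      have hS : mwS r (t+1) i = mwS r t i + r t i := Finset.sum_range_succ _ _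
      rw [hS, mul_add, Real.exp_add]
      field_simp
      rw [div_self (hW_pos t).ne']
    set γ : ℝ := (5/4) * (η t)^2 - η t with hγdef
    have hQle : Q ≤ Real.exp (η t * rs t) *
        (1 + γ * (rs t - mwXb r η t)) := by
      have hpt : ∀ i : Fin K, Real.exp (η t * r t i) ≤
          Real.exp (η t * rs t) * (1 + γ * (rs t - r t i)) := by
        intro i
        have hx0 : 0 ≤ η t * (rs t - r t i) := by
          have := hr2 t i; nlinarith
        have hx1 : η t * (rs t - r t i) ≤ 1/2 := by
          have h2' : rs t - r t i ≤ 2 := by linarith [hr1 t i, hrs1 t]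
          nlinarith [hη_le t, hηt.le]
        have hq := exp_neg_quad hx0 hx1
        have he : Real.exp (η t * r t i) =
            Real.exp (η t * rs t) * Real.exp (-(η t * (rs t - r t i))) := by
          rw [← Real.exp_add]; ring_nf
        rw [he]
        have hq2 : Real.exp (-(η t * (rs t - r t i))) ≤ 1 + γ * (rs t - r t i) := by
          have hl2 : rs t - r t i ≤ 2 := by linarith [hr1 t i, hrs1 t]
          have hl0 : 0 ≤ rs t - r t i := by linarith [hr2 t i]
          rw [hγdef]
          nlinarith [hq, mul_nonneg (sq_nonneg (η t))
            (mul_nonneg hl0 (by linarith : (0:ℝ) ≤ 2 - (rs t - r t i)))]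
        exact mul_le_mul_of_nonneg_left hq2 (Real.exp_pos _).le
      calc Q ≤ ∑ i, Real.exp (η t * mwS r t i) / mwW r η t *
            (Real.exp (η t * rs t) * (1 + γ * (rs t - r t i))) :=
            Finset.sum_le_sum (fun i _ =>
              mul_le_mul_of_nonneg_left (hpt i) (hp_pos t i).le)
        _ = Real.exp (η t * rs t) * ∑ i, Real.exp (η t * mwS r t i) / mwW r η t *
            (1 + γ * (rs t - r t i)) := by
            rw [Finset.mul_sum]; refine Finset.sum_congr rfl (fun i _ => ?_); ring
        _ = Real.exp (η t * rs t) * (1 + γ * (rs t - mwXb r η t)) := by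
            congr 1
            have expand : ∀ i : Fin K, Real.exp (η t * mwS r t i) / mwW r η t *
                (1 + γ * (rs t - r t i)) =
                Real.exp (η t * mwS r t i) / mwW r η t * (1 + γ * rs t)
                  - γ * (Real.exp (η t * mwS r t i) / mwW r η t * r t i) := by
              intro i; ring
            rw [Finset.sum_congr rfl (fun i _ => expand i), Finset.sum_sub_distrib,
              ← Finset.sum_mul, ← Finset.mul_sum, hp_sum]
            show 1 * (1 + γ * rs t) - γ * mwXb r η t = _
            ring
    have hMpos : 0 < 1 + γ * (rs t - mwXb r η t) := by
      have h1' : η t * (rs t - mwXb r η t) ≤ 1/2 := by nlinarith [hη_le t, hηt.le]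
      have h2' : 0 ≤ (5/4) * (η t)^2 * (rs t - mwXb r η t) := by positivity
      rw [hγdef]; nlinarith
    have hlogQ : Real.log Q ≤ η t * (mwXb r η t +
        (5/4) * η t * (rs t - mwXb r η t)) := by
      have := Real.log_le_log hQpos hQle
      rw [Real.log_mul (Real.exp_pos _).ne' hMpos.ne', Real.log_exp] at this
      have hlm := Real.log_le_sub_one_of_pos hMpos
      rw [hγdef] at this hlm
      nlinarith [this, hlm]
    have h2 : (Real.log (∑ i, Real.exp (η t * mwS r (t+1) i)) - Real.log K) / η t ≤
        Φ t + mwXb r η t + (5/4) * η t * (rs t - mwXb r η t) := by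
      have hlogS : Real.log (∑ i, Real.exp (η t * mwS r (t+1) i)) ≤
          Real.log (mwW r η t) + η t * (mwXb r η t + (5/4) * η t * (rs t - mwXb r η t)) := by
        rw [hfact, Real.log_mul (hW_pos t).ne' hQpos.ne']
        linarith [hlogQ]
      have heq : (Real.log (mwW r η t) + η t * (mwXb r η t
            + (5/4) * η t * (rs t - mwXb r η t)) - Real.log K) / η t
          = Φ t + mwXb r η t + (5/4) * η t * (rs t - mwXb r η t) := by
        simp only [hΦdef]
        field_simp
        ring
      rw [← heq]
      exact (div_le_div_iff_of_pos_right hηt).mpr (by linarith [hlogS])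
    exact le_trans h1 h2
  -- telescope
  have telescope : ∀ t, Φ t ≤ ∑ s ∈ range t,
      (mwXb r η s + (5/4) * η s * (rs s - mwXb r η s)) := by
    intro t
    induction t with
    | zero => simp [hΦ0]
    | succ n ih =>
      rw [Finset.sum_range_succ]
      calc Φ (n+1) ≤ Φ n + mwXb r η n + (5/4) * η n * (rs n - mwXb r η n) := step n
        _ ≤ _ := by linarith
  -- lower bound
  have lower : ∀ t (b : Fin K), mwS r t b - Real.log K / η t ≤ Φ t := by
    intro t b
    have hexp : Real.exp (η t * mwS r t b) ≤ mwW r η t :=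
      Finset.single_le_sum (f := fun i => Real.exp (η t * mwS r t i))
        (fun i _ => (Real.exp_pos _).le) (mem_univ b)
    have : η t * mwS r t b ≤ Real.log (mwW r η t) :=
      (Real.le_log_iff_exp_le (hW_pos t)).mpr hexp
    show mwS r t b - Real.log K / η t ≤ (Real.log (mwW r η t) - Real.log ↑K) / η t
    rw [le_div_iff₀ (hη_pos t)]
    have h3 : (mwS r t b - Real.log ↑K / η t) * η t
        = η t * mwS r t b - Real.log K := by
      rw [sub_mul, div_mul_cancel₀ _ (hη_pos t).ne']
      ring
    rw [h3]
    linarith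
  -- zero expert: mwS r t astar = 0
  have hSstar : ∀ t, mwS r t astar = 0 := by
    intro t; simp [mwS, hstar]
  -- A
  set A : ℝ := ∑ t ∈ range T, η t * (rs t - mwXb r η t) with hAdef
  have hA0 : 0 ≤ A := Finset.sum_nonneg (fun t _ =>
    mul_nonneg (hη_pos t).le (by linarith [hXb_le t]))
  -- Y bound
  have hY : ∀ t, t ≤ T → -(∑ s ∈ range t, mwXb r η s) ≤
      Real.log K / η t + (5/4) * A := by
    intro t ht
    have h1 := lower t astar
    rw [hSstar t] at h1
    have h2 := telescope t
    have h3 : ∑ s ∈ range t, (mwXb r η s + (5/4) * η s * (rs s - mwXb r η s))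
        = ∑ s ∈ range t, mwXb r η s + (5/4) * ∑ s ∈ range t, η s * (rs s - mwXb r η s) := by
      rw [Finset.sum_add_distrib, Finset.mul_sum]
      congr 1
      refine Finset.sum_congr rfl (fun s _ => by ring)
    have h4 : ∑ s ∈ range t, η s * (rs s - mwXb r η s) ≤ A := by
      rw [hAdef]
      apply Finset.sum_le_sum_of_subset_of_nonneg (Finset.range_subset_range.mpr ht)
      intro i _ _
      exact mul_nonneg (hη_pos i).le (by linarith [hXb_le i])
    rw [h3] at h2
    linarith
  -- Abel invariant
  have abel : ∀ t, t ≤ T → ∑ s ∈ range t, η s * (-(mwXb r η s)) ≤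
      (5/4) * A * (η 0 - η t) + η t * (-(∑ s ∈ range t, mwXb r η s))
        + Real.log K * (η 0 / η t) - Real.log K := by
    intro t ht
    induction t with
    | zero =>
      simp
      rw [div_self (hη_pos 0).ne']
      simp
    | succ n ih =>
      have hn : n ≤ T := le_of_lt (Nat.lt_of_lt_of_le (Nat.lt_succ_self n) ht)
      have ih' := ih hn
      have hY1 := hY (n+1) ht
      have hd0 : 0 ≤ η n - η (n+1) := by linarith [hη_mono n (n+1) (Nat.le_succ n)]
      have hu := hη_pos (n+1)
      have hv := hη_pos n
      have hw0 : η n ≤ η 0 := hη_mono 0 n (Nat.zero_le n)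
      set Y1 : ℝ := -(∑ s ∈ range (n+1), mwXb r η s) with hY1def
      have hstep1 : ∑ s ∈ range (n+1), η s * (-(mwXb r η s)) =
          (∑ s ∈ range n, η s * (-(mwXb r η s))) + η n * (Y1 - (-(∑ s ∈ range n, mwXb r η s))) := by
        rw [Finset.sum_range_succ, hY1def, Finset.sum_range_succ]
        ring
      -- key: (η n - η (n+1)) * Y1 ≤ (5/4)*A*(η n - η (n+1)) + logK*(η 0/η (n+1) - η 0/η n)
      have hkey : (η n - η (n+1)) * Y1 ≤ (5/4) * A * (η n - η (n+1))
          + Real.log K * (η 0 / η (n+1)) - Real.log K * (η 0 / η n) := by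
        have hb1 : (η n - η (n+1)) * Y1 ≤
            (η n - η (n+1)) * (Real.log K / η (n+1) + (5/4) * A) :=
          mul_le_mul_of_nonneg_left hY1 hd0
        have hb2 : (η n - η (n+1)) * (Real.log K / η (n+1)) ≤
            Real.log K * (η 0 / η (n+1)) - Real.log K * (η 0 / η n) := by
          have he : Real.log K * (η 0 / η (n+1)) - Real.log K * (η 0 / η n)
              = Real.log K * (η 0 * ((η n - η (n+1)) / (η n * η (n+1)))) := by
            field_simp
          rw [he]
          have hge : (η n - η (n+1)) / η (n+1) ≤ η 0 * ((η n - η (n+1)) / (η n * η (n+1))) := by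
            rw [div_le_iff₀ hu] at *
            have : η 0 * ((η n - η (n+1)) / (η n * η (n+1))) * η (n+1)
                = (η 0 / η n) * (η n - η (n+1)) := by field_simp
            rw [this]
            have h01 : 1 ≤ η 0 / η n := (one_le_div hv).mpr hw0
            nlinarith
          calc (η n - η (n+1)) * (Real.log K / η (n+1))
              = Real.log K * ((η n - η (n+1)) / η (n+1)) := by ring
            _ ≤ Real.log K * (η 0 * ((η n - η (n+1)) / (η n * η (n+1)))) :=
                mul_le_mul_of_nonneg_left hge hlogK
        nlinarith [hb1, hb2]
      rw [hstep1]
      have hgoal : (5/4) * A * (η 0 - η (n+1)) + η (n+1) * Y1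
          + Real.log K * (η 0 / η (n+1)) - Real.log K
          ≥ (5/4) * A * (η 0 - η n) + η n * Y1 + Real.log K * (η 0 / η n) - Real.log K := by
        nlinarith [hkey]
      calc (∑ s ∈ range n, η s * (-(mwXb r η s)))
            + η n * (Y1 - (-(∑ s ∈ range n, mwXb r η s)))
          ≤ ((5/4) * A * (η 0 - η n) + η n * (-(∑ s ∈ range n, mwXb r η s))
              + Real.log K * (η 0 / η n) - Real.log K)
            + η n * (Y1 - (-(∑ s ∈ range n, mwXb r η s))) := by linarith
        _ = (5/4) * A * (η 0 - η n) + η n * Y1 + Real.log K * (η 0 / η n) - Real.log K := by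
            ring
        _ ≤ _ := hgoal
  -- conclude: bound on B := Σ η (-Xb)
  have hB := abel T le_rfl
  have hYT := hY T le_rfl
  have hηT := hη_pos T
  have hη0 := hη_le 0
  have hη0T : η T ≤ η 0 := hη_mono 0 T (Nat.zero_le T)
  have hlK : 0 ≤ Real.log K / η T := div_nonneg hlogK hηT.le
  -- η T * Y T ≤ logK + η T * (5/4) A
  have hYT' : η T * (-(∑ s ∈ range T, mwXb r η s)) ≤ Real.log K + η T * ((5/4) * A) := by
    have := mul_le_mul_of_nonneg_left hYT hηT.le
    have he : η T * (Real.log K / η T + 5/4 * A) = Real.log K + η T * (5/4*A) := by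
      field_simp
    calc η T * (-(∑ s ∈ range T, mwXb r η s)) ≤ η T * (Real.log K / η T + 5/4 * A) := this
      _ = Real.log K + η T * ((5/4) * A) := he
  have hlog0T : Real.log K * (η 0 / η T) ≤ (Real.log K / η T) / 4 := by
    have h1 : η 0 / η T ≤ (1/4) / η T := (div_le_div_iff_of_pos_right hηT).mpr (hη_le 0)
    have h2 : Real.log K * ((1/4) / η T) = (Real.log K / η T) / 4 := by ring
    calc Real.log K * (η 0 / η T) ≤ Real.log K * ((1/4) / η T) :=
          mul_le_mul_of_nonneg_left h1 hlogK
      _ = (Real.log K / η T) / 4 := h2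
  -- bound on B
  have hBfin : ∑ s ∈ range T, η s * (-(mwXb r η s)) ≤
      (5/16) * A + (Real.log K / η T) / 4 := by
    have hAη0 : (5/4) * A * (η 0 - η T) ≤ (5/16) * A - (5/4) * A * η T := by
      nlinarith [hA0, hη0, hηT]
    linarith [hB, hYT', hlog0T]
  -- A self-bound
  have hAsplit : A = (∑ t ∈ range T, η t * rs t)
      + ∑ s ∈ range T, η s * (-(mwXb r η s)) := by
    rw [hAdef, ← Finset.sum_add_distrib]
    refine Finset.sum_congr rfl (fun s _ => by ring)
  have hR0 : 0 ≤ ∑ t ∈ range T, η t * rs t :=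
    Finset.sum_nonneg (fun t _ => mul_nonneg (hη_pos t).le (hrs0 t))
  have hAup : A ≤ (∑ t ∈ range T, η t * rs t) + (5/16) * A + (Real.log K / η T) / 4 := by
    rw [hAsplit]; linarith [hBfin]
  -- final
  have hfin1 : mwS r T a - ∑ t ∈ range T, mwXb r η t ≤
      Real.log K / η T + (5/4) * A := by
    have h1 := lower T a
    have h2 := telescope T
    have h3 : ∑ s ∈ range T, (mwXb r η s + (5/4) * η s * (rs s - mwXb r η s))
        = ∑ s ∈ range T, mwXb r η s + (5/4) * A := by
      rw [hAdef, Finset.mul_sum, ← Finset.sum_add_distrib]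
      refine Finset.sum_congr rfl (fun s _ => by ring)
    rw [h3] at h2
    linarith
  linarith [hfin1, hAup, hlK, hR0, hA0]

lemma fin_filter_sum {T : ℕ} (t : Fin T) (f : Fin T → ℝ) (g : ℕ → ℝ)
    (hfg : ∀ s : Fin T, g s = f s) :
    ∑ s ∈ Finset.univ.filter (fun s => s < t), f s = ∑ i ∈ range (t:ℕ), g i := by
  refine Finset.sum_bij' (i := fun (s : Fin T) _ => (s : ℕ))
    (j := fun i hi => (⟨i, lt_trans (mem_range.mp hi) t.isLt⟩ : Fin T))
    ?_ ?_ ?_ ?_ ?_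
  · intro s hs
    rw [mem_filter] at hs
    rw [mem_range]
    exact hs.2
  · intro i hi
    rw [mem_filter]
    exact ⟨mem_univ _, mem_range.mp hi⟩
  · intro s hs; simp
  · intro i hi; simp
  · intro s hs; exact (hfg s).symm

theorem mw_regret_bound (T K : ℕ) (hT : 1 ≤ T) (hK : 2 ≤ K)
    (r : Fin T → Fin K → ℝ)
    (hr : ∀ t a, r t a ∈ Set.Icc (-1 : ℝ) 1)
    (astar : Fin K) (hstar : ∀ t, r t astar = 0)
    (η : Fin T → ℝ)
    (hη_pos : ∀ t, 0 < η t)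
    (hη_le : ∀ t, η t ≤ 1 / 4)
    (hη_mono : ∀ s t : Fin T, s ≤ t → η t ≤ η s)
    (p : Fin T → Fin K → ℝ)
    (hp : ∀ t a, p t a =
      Real.exp (η t * ∑ s ∈ Finset.univ.filter (fun s => s < t), r s a) /
        ∑ a' : Fin K,
          Real.exp (η t * ∑ s ∈ Finset.univ.filter (fun s => s < t), r s a'))
    (Xbar : Fin T → ℝ) (hX : ∀ t, Xbar t = ∑ a : Fin K, p t a * r t a)
    (rstar : Fin T → ℝ)
    (hrstar : ∀ t, IsGreatest (Set.range (r t)) (rstar t))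
    (V : ℝ)
    (hV : V = Real.log K / η ⟨T - 1, by omega⟩ + ∑ t : Fin T, η t * rstar t) :
    (Finset.univ.sup' ⟨astar, Finset.mem_univ astar⟩ fun a => ∑ t : Fin T, r t a)
      - ∑ t : Fin T, Xbar t ≤ 2 * V := by
  set η' : ℕ → ℝ := fun t => η ⟨min t (T-1), by omega⟩ with hη'def
  set r' : ℕ → Fin K → ℝ := fun t a => if h : t < T then r ⟨t, h⟩ a else 0 with hr'def
  set rs' : ℕ → ℝ := fun t => if h : t < T then rstar ⟨t, h⟩ else 0 with hrs'def
  -- hypotheses for the master theorem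
  have hr1' : ∀ t a, -1 ≤ r' t a := by
    intro t a
    simp only [hr'def]
    split
    · exact (hr _ a).1
    · norm_num
  have hr2' : ∀ t a, r' t a ≤ rs' t := by
    intro t a
    simp only [hr'def, hrs'def]
    split
    · exact (hrstar _).2 (Set.mem_range_self a)
    · exact le_rfl
  have hrs1' : ∀ t, rs' t ≤ 1 := by
    intro t
    simp only [hrs'def]
    split
    · next h =>
      obtain ⟨a, ha⟩ := (hrstar ⟨t, h⟩).1
      rw [← ha]
      exact (hr _ a).2
    · norm_num
  have hstar' : ∀ t, r' t astar = 0 := by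
    intro t
    simp only [hr'def]
    split
    · exact hstar _
    · rfl
  have hη'pos : ∀ t, 0 < η' t := fun t => hη_pos _
  have hη'le : ∀ t, η' t ≤ 1/4 := fun t => hη_le _
  have hη'mono : ∀ s t : ℕ, s ≤ t → η' t ≤ η' s := by
    intro s t hst
    exact hη_mono _ _ (by simp [Fin.mk_le_mk]; omega)
  -- identification lemmas
  have hηval : ∀ t : Fin T, η' (t : ℕ) = η t := by
    intro t
    have ht := t.isLt
    simp only [hη'def]
    congr 1
    exact Fin.ext (by simp; omega)
  have hrval : ∀ (t : Fin T) (a : Fin K), r' (t : ℕ) a = r t a := by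
    intro t a
    simp only [hr'def, t.isLt, dif_pos, Fin.eta]
  have hrsval : ∀ t : Fin T, rs' (t : ℕ) = rstar t := by
    intro t
    simp only [hrs'def, t.isLt, dif_pos, Fin.eta]
  have hSval : ∀ (t : Fin T) (a : Fin K),
      (∑ s ∈ Finset.univ.filter (fun s => s < t), r s a) = mwS r' (t : ℕ) a := by
    intro t a
    exact fin_filter_sum t (fun s => r s a) (fun i => r' i a) (fun s => hrval s a)
  have hWval : ∀ t : Fin T,
      (∑ a' : Fin K, Real.exp (η t * ∑ s ∈ Finset.univ.filter (fun s => s < t), r s a'))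
        = mwW r' η' (t : ℕ) := by
    intro t
    refine Finset.sum_congr rfl (fun a' _ => ?_)
    rw [hSval t a', hηval t]
  have hpval : ∀ (t : Fin T) (a : Fin K),
      p t a = Real.exp (η' (t:ℕ) * mwS r' (t:ℕ) a) / mwW r' η' (t:ℕ) := by
    intro t a
    rw [hp, hSval t a, hηval t, hWval t]
  have hXval : ∀ t : Fin T, Xbar t = mwXb r' η' (t : ℕ) := by
    intro t
    rw [hX]
    refine Finset.sum_congr rfl (fun a _ => ?_)
    rw [hpval t a, hrval t a]
  -- apply master theorem
  have master := fun a => mw_master hK r' η' rs' astar hr1' hr2' hrs1' hstar'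
    hη'pos hη'le hη'mono T a
  -- translate sums
  have hsum1 : ∀ a : Fin K, mwS r' T a = ∑ t : Fin T, r t a := by
    intro a
    rw [show mwS r' T a = ∑ i ∈ range T, r' i a from rfl,
      ← Fin.sum_univ_eq_sum_range (fun i => r' i a) T]
    exact Finset.sum_congr rfl (fun t _ => hrval t a)
  have hsum2 : ∑ t ∈ range T, mwXb r' η' t = ∑ t : Fin T, Xbar t := by
    rw [← Fin.sum_univ_eq_sum_range (fun i => mwXb r' η' i) T]
    exact Finset.sum_congr rfl (fun t _ => (hXval t).symm)
  have hsum3 : ∑ t ∈ range T, η' t * rs' t = ∑ t : Fin T, η t * rstar t := by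
    rw [← Fin.sum_univ_eq_sum_range (fun i => η' i * rs' i) T]
    exact Finset.sum_congr rfl (fun t _ => by rw [hηval t, hrsval t])
  have hηT : η' T = η ⟨T - 1, by omega⟩ := by
    simp only [hη'def]
    congr 1
    exact Fin.ext (by simp)
  rw [sub_le_iff_le_add]
  apply Finset.sup'_le
  intro b _
  rw [← sub_le_iff_le_add]
  have hb := master b
  rw [hsum1 b, hsum2, hsum3, hηT] at hb
  rw [hV]
  exact hb
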